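/- arXiv:math/0112264 — 3 statements merged into one kernel-verified Lean document; each statement's English description precedes it below -/
import Mathlib

section
/- For every linearly ordered abelian group G, the group Aut(G,+,<) of order-preserving additive automorphisms of G is right orderable; that is, Aut(G,+,<) admits a linear order < such that f < g implies f ∘ k < g ∘ k for all f, g, k in Aut(G,+,<). -/
/-- The group of order-preserving additive automorphisms of a linearly ordered abelian
group `G`, i.e. `G ≃+o G` under composition. -/
instance orderAddAutGroup (G : Type*) [AddCommGroup G] [LinearOrder G] [IsOrderedAddMonoid G] : Group (G ≃+o G) where
  mul f g := g.trans f
  one := OrderAddMonoidIso.refl G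
  inv f := ⟨(f : G ≃+ G).symm, fun {a b} => f.toOrderIso.symm.le_iff_le⟩
  mul_assoc f g h := rfl
  one_mul f := rfl
  mul_one f := rfl
  inv_mul_cancel f := by
    apply OrderAddMonoidIso.ext
    intro a
    exact (f : G ≃+ G).symm_apply_apply a

/-- For every linearly ordered abelian group `G`, the automorphism group `Aut(G,+,<)`
is right orderable. -/
theorem orderAut_rightOrderable (G : Type*) [AddCommGroup G] [LinearOrder G] [IsOrderedAddMonoid G] :
    ∃ o : LinearOrder (G ≃+o G),
      ∀ f g k : G ≃+o G, o.lt f g → o.lt (f * k) (g * k) := by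
  classical
  have hwo : IsWellOrder G (WellOrderingRel) := WellOrderingRel.isWellOrder
  set r : G → G → Prop := WellOrderingRel with hr
  -- auxiliary: transitivity of the lexicographic relation
  have lexTrans : ∀ a b c : G → G, Pi.Lex r (fun {_} => ((· < ·) : G → G → Prop)) a b →
      Pi.Lex r (fun {_} => ((· < ·) : G → G → Prop)) b c →
      Pi.Lex r (fun {_} => ((· < ·) : G → G → Prop)) a c := by
    rintro a b c ⟨N₁, lt_N₁, a_lt_b⟩ ⟨N₂, lt_N₂, b_lt_c⟩
    rcases trichotomous_of r N₁ N₂ with H | rfl | H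
    · exact ⟨N₁, fun j hj => (lt_N₁ _ hj).trans (lt_N₂ _ <| trans_of r hj H),
        lt_N₂ _ H ▸ a_lt_b⟩
    · exact ⟨N₁, fun j hj => (lt_N₁ _ hj).trans (lt_N₂ _ hj), a_lt_b.trans b_lt_c⟩
    · exact ⟨N₂, fun j hj => (lt_N₁ _ (trans_of r hj H)).trans (lt_N₂ _ hj),
        (lt_N₁ _ H).symm ▸ b_lt_c⟩
  -- the right-invariant relation: compare inverses lexicographically (reversed)
  set R : (G ≃+o G) → (G ≃+o G) → Prop :=
    fun f g => Pi.Lex r (fun {_} => ((· < ·) : G → G → Prop)) (⇑g⁻¹) (⇑f⁻¹) with hR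
  have hinj : Function.Injective (fun f : G ≃+o G => (⇑f⁻¹ : G → G)) := by
    intro f g h
    have : f⁻¹ = g⁻¹ := OrderAddMonoidIso.ext (fun x => congrFun h x)
    exact inv_injective this
  have htri : IsTrichotomous (G → G) (Pi.Lex r (fun {_} => ((· < ·) : G → G → Prop))) :=
    Pi.isTrichotomous_lex r _ hwo.wf
  haveI : IsStrictTotalOrder (G ≃+o G) R :=
    { trichotomous := by
        intro f g h1 h2
        rcases @trichotomous _ _ htri (⇑g⁻¹) (⇑f⁻¹) with h | h | h
        · exact (h1 h).elim
        · exact hinj h.symm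
        · exact (h2 h).elim
      irrefl := by
        rintro f ⟨i, _, hlt⟩
        exact lt_irrefl _ hlt
      trans := fun f g h hfg hgh => lexTrans _ _ _ hgh hfg }
  haveI : DecidableRel R := Classical.decRel _
  refine ⟨linearOrderOfSTO R, ?_⟩
  rintro f g k ⟨i, hj, hlt⟩
  have hfk : (f * k)⁻¹ = k⁻¹ * f⁻¹ := mul_inv_rev f k
  have hgk : (g * k)⁻¹ = k⁻¹ * g⁻¹ := mul_inv_rev g k
  have hmono : StrictMono (⇑(k⁻¹ : G ≃+o G)) := (k⁻¹ : G ≃+o G).toOrderIso.strictMono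
  refine ⟨i, fun j hji => ?_, ?_⟩
  · show (g * k)⁻¹ j = (f * k)⁻¹ j
    rw [hfk, hgk]
    exact congrArg (⇑(k⁻¹ : G ≃+o G)) (hj j hji)
  · show (g * k)⁻¹ i < (f * k)⁻¹ i
    rw [hfk, hgk]
    exact hmono hlt
end

section
/- If H is a right-orderable group (H admits a linear order < with h < g implying hk < gk for all h, g, k ∈ H) and R = ℤH is its integral group ring, then every unit of R is trivial: if u ∈ R is a unit, then u = h or u = -h for some h ∈ H (i.e., u = single h 1 or u = -single h 1 in MonoidAlgebra ℤ H). -/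
/-- If `H` is a right-orderable group, then every unit of the integral group ring `ℤH`
is trivial, i.e. of the form `± h` for some `h ∈ H`. -/
theorem monoidAlgebra_units_trivial_of_rightOrderable
    (H : Type*) [Group H]
    (hH : ∃ o : LinearOrder H, ∀ a b c : H, o.lt a b → o.lt (a * c) (b * c))
    (u : MonoidAlgebra ℤ H) (hu : IsUnit u) :
    ∃ h : H, u = MonoidAlgebra.single h 1 ∨ u = -MonoidAlgebra.single h 1 := by
  classical
  obtain ⟨o, ho⟩ := hH
  letI := o
  haveI : MulRightStrictMono H := ⟨fun c a b h => ho a b c h⟩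
  haveI : TwoUniqueProds H := TwoUniqueProds.of_covariant_left
  obtain ⟨U, rfl⟩ := hu
  set u : MonoidAlgebra ℤ H := (U : MonoidAlgebra ℤ H) with hu_def
  set v : MonoidAlgebra ℤ H := ((U⁻¹ : _) : MonoidAlgebra ℤ H) with hv_def
  have huv : u * v = 1 := by simp [hu_def, hv_def, ← Units.val_mul]
  have hune : u ≠ 0 := Units.ne_zero U
  have hvne : v ≠ 0 := Units.ne_zero U⁻¹
  have hA : u.coeff.support.Nonempty := Finsupp.support_nonempty_iff.mpr (fun h => hune (MonoidAlgebra.coeff_eq_zero.mp h))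
  have hB : v.coeff.support.Nonempty := Finsupp.support_nonempty_iff.mpr (fun h => hvne (MonoidAlgebra.coeff_eq_zero.mp h))
  -- the supports are singletons
  have hcard : ¬ 1 < u.coeff.support.card * v.coeff.support.card := by
    intro hc
    obtain ⟨p1, hp1, p2, hp2, hne, h1, h2⟩ :=
      TwoUniqueProds.uniqueMul_of_one_lt_card hc
    rw [Finset.mem_product] at hp1 hp2
    have key : ∀ p : H × H, p.1 ∈ u.coeff.support → p.2 ∈ v.coeff.support →
        UniqueMul u.coeff.support v.coeff.support p.1 p.2 → p.1 * p.2 = 1 := by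
      intro p hpa hpb hup
      have := MonoidAlgebra.mul_apply_mul_eq_mul_of_uniqueMul hup
      rw [huv] at this
      have hne0 : (1 : MonoidAlgebra ℤ H).coeff (p.1 * p.2) ≠ 0 := by
        rw [this]
        exact mul_ne_zero (Finsupp.mem_support_iff.mp hpa)
          (Finsupp.mem_support_iff.mp hpb)
      by_contra hne1
      exact hne0 (by
        show (MonoidAlgebra.single (1 : H) (1 : ℤ)).coeff (p.1 * p.2) = 0
        rw [MonoidAlgebra.coeff_single_apply, if_neg (fun h => hne1 h.symm)])
    have e1 : p1.1 * p1.2 = 1 := key p1 hp1.1 hp1.2 h1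
    have e2 : p2.1 * p2.2 = 1 := key p2 hp2.1 hp2.2 h2
    have := h1 hp2.1 hp2.2 (e2.trans e1.symm)
    exact hne (Prod.ext this.1.symm this.2.symm)
  have hAcard : u.coeff.support.card = 1 := by
    have h1 : 1 ≤ u.coeff.support.card := Finset.Nonempty.card_pos hA
    have h2 : 1 ≤ v.coeff.support.card := Finset.Nonempty.card_pos hB
    nlinarith [not_lt.mp hcard]
  obtain ⟨h, hsupp⟩ := Finset.card_eq_one.mp hAcard
  have hu_eq : u = MonoidAlgebra.single h (u.coeff h) := by
    ext x
    rcases eq_or_ne x h with rfl | hx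
    · simp [Finsupp.single_apply]
    · rw [MonoidAlgebra.coeff_single_apply, if_neg (fun hh => hx hh.symm)]
      by_contra hx0
      have : x ∈ u.coeff.support := Finsupp.mem_support_iff.mpr hx0
      rw [hsupp, Finset.mem_singleton] at this
      exact hx this
  have hc : IsUnit (u.coeff h) := by
    have h1 : (u * v).coeff 1 = 1 := by rw [huv]; simp [MonoidAlgebra.one_def]
    rw [hu_eq, MonoidAlgebra.single_mul_apply] at h1
    exact IsUnit.of_mul_eq_one _ h1
  rcases Int.isUnit_iff.mp hc with h1 | h1
  · exact ⟨h, Or.inl (by rw [hu_eq, h1])⟩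
  · refine ⟨h, Or.inr ?_⟩
    rw [hu_eq, h1]; simp [MonoidAlgebra.single_neg]
end

section
/- Let H be a group equipped with a linear order < such that h < g implies hk < gk for all h, g, k ∈ H, let R = ℤH, and let R^{>0} = {r ∈ R : r ≠ 0 and the coefficient of r at the maximal element of its support is positive}, which is a multiplicative submonoid of R containing 1. Then the group of invertible elements of the monoid R^{>0} is exactly {single h 1 : h ∈ H}; i.e., u ∈ R^{>0} has a multiplicative inverse in R^{>0} if and only if u = h for some h ∈ H. -/
/-- A nonzero element of the group ring `ℤH` is positive if its coefficient at the
maximal element of its support is a positive integer. -/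
def MonoidAlgebra.IsPositive {H : Type*} [LinearOrder H] (r : MonoidAlgebra ℤ H) : Prop :=
  ∃ hne : r.coeff.support.Nonempty, 0 < r.coeff (r.coeff.support.max' hne)

/-- If `H` is a right-ordered group, then a positive element `u` of the group ring `ℤH`
has a multiplicative inverse which is again positive if and only if `u` is an element
of `H` (i.e. `u = single h 1` for some `h ∈ H`): `U(R^{>0}) = H`. -/
theorem monoidAlgebra_positive_units
    (H : Type*) [Group H] [LinearOrder H]
    (hro : ∀ a b c : H, a < b → a * c < b * c)
    (u : MonoidAlgebra ℤ H) (hu : MonoidAlgebra.IsPositive u) :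
    (∃ v : MonoidAlgebra ℤ H, MonoidAlgebra.IsPositive v ∧ u * v = 1 ∧ v * u = 1) ↔
      ∃ h : H, u = MonoidAlgebra.single h 1 := by
  haveI : MulRightStrictMono H := ⟨fun c a b h => hro a b c h⟩
  haveI : TwoUniqueProds H := TwoUniqueProds.of_covariant_left
  constructor
  · rintro ⟨v, hv, huv, -⟩
    obtain ⟨hune, hupos⟩ := hu
    obtain ⟨hvne, hvpos⟩ := hv
    -- show both supports are singletons
    have hcard : ¬ 1 < u.coeff.support.card * v.coeff.support.card := by
      intro hc
      obtain ⟨p1, hp1, p2, hp2, hne, hu1, hu2⟩ :=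
        TwoUniqueProds.uniqueMul_of_one_lt_card hc
      rw [Finset.mem_product] at hp1 hp2
      have h1 : (u * v).coeff (p1.1 * p1.2) ≠ 0 := by
        rw [MonoidAlgebra.mul_apply_mul_eq_mul_of_uniqueMul hu1]
        exact mul_ne_zero (Finsupp.mem_support_iff.mp hp1.1)
          (Finsupp.mem_support_iff.mp hp1.2)
      have h2 : (u * v).coeff (p2.1 * p2.2) ≠ 0 := by
        rw [MonoidAlgebra.mul_apply_mul_eq_mul_of_uniqueMul hu2]
        exact mul_ne_zero (Finsupp.mem_support_iff.mp hp2.1)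
          (Finsupp.mem_support_iff.mp hp2.2)
      rw [huv] at h1 h2
      have e1 : p1.1 * p1.2 = 1 := by
        by_contra hq
        apply h1
        rw [MonoidAlgebra.one_def]
        exact Finsupp.single_eq_of_ne' (Ne.symm hq)
      have e2 : p2.1 * p2.2 = 1 := by
        by_contra hq
        apply h2
        rw [MonoidAlgebra.one_def]
        exact Finsupp.single_eq_of_ne' (Ne.symm hq)
      obtain ⟨ea, eb⟩ := hu1 hp2.1 hp2.2 (e2.trans e1.symm)
      exact hne (Prod.ext ea eb).symm
    have hmul : u.coeff.support.card * v.coeff.support.card = 1 := by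
      have h1 := hune.card_pos
      have h2 := hvne.card_pos
      have : 0 < u.coeff.support.card * v.coeff.support.card := Nat.mul_pos h1 h2
      omega
    have hA := Nat.eq_one_of_mul_eq_one_right hmul
    have hB := Nat.eq_one_of_mul_eq_one_left hmul
    obtain ⟨a, b, hb0, hueq⟩ := Finsupp.card_support_eq_one'.mp hA
    obtain ⟨a', b', hb0', hveq⟩ := Finsupp.card_support_eq_one'.mp hB
    refine ⟨a, ?_⟩
    have hbpos : 0 < b := by
      have hsupp : u.coeff.support = {a} := by
        rw [hueq, Finsupp.support_single_ne_zero _ hb0]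
      have : u.coeff.support.max' hune = a := by
        simp [hsupp]
      rw [this, hueq, Finsupp.single_eq_same] at hupos
      exact hupos
    rw [← MonoidAlgebra.ofCoeff_coeff u, ← MonoidAlgebra.ofCoeff_coeff v, hueq, hveq, MonoidAlgebra.ofCoeff_single, MonoidAlgebra.ofCoeff_single, MonoidAlgebra.single_mul_single, MonoidAlgebra.one_def] at huv
    have : MonoidAlgebra.single (a * a') (b * b') = MonoidAlgebra.single (1 : H) (1 : ℤ) := huv
    rw [MonoidAlgebra.single_inj] at this
    rcases this with ⟨-, hbb⟩ | ⟨hbb, -⟩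
    · have : b = 1 := Int.eq_one_of_mul_eq_one_right hbpos.le hbb
      rw [← MonoidAlgebra.ofCoeff_coeff u, hueq, this, MonoidAlgebra.ofCoeff_single]
    · exact absurd hbb (mul_ne_zero hb0 hb0')
  · rintro ⟨h, rfl⟩
    refine ⟨MonoidAlgebra.single h⁻¹ 1, ?_, ?_, ?_⟩
    · refine ⟨?_, ?_⟩
      · rw [MonoidAlgebra.coeff_single, Finsupp.support_single_ne_zero _ one_ne_zero]
        exact Finset.singleton_nonempty _
      · have hsupp : (MonoidAlgebra.single h⁻¹ (1 : ℤ)).coeff.support = {h⁻¹} :=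
          Finsupp.support_single_ne_zero _ one_ne_zero
        simp [hsupp]
    · rw [MonoidAlgebra.single_mul_single, mul_inv_cancel, one_mul, MonoidAlgebra.one_def]
    · rw [MonoidAlgebra.single_mul_single, inv_mul_cancel, one_mul, MonoidAlgebra.one_def]
end
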